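/- arXiv:2605.27782 — 3 statements merged into one kernel-verified Lean document; each statement's English description precedes it below -/
import Mathlib

section
/- Suppose f is μ-strongly convex with minimizer w*_f, g satisfies |f(w) - g(w)| ≤ α and ‖∇f(w) - ∇g(w)‖ ≤ ζ for all w, and points w̃, w_T satisfy g(w_T) ≤ g(w̃) and ‖∇g(w̃)‖ ≤ ρ. Then f(w_T) - f(w*_f) ≤ 2α + (ρ² + 2ζρ + ζ²)/(2μ). -/
open scoped RealInnerProductSpace

lemma strong_lower_bound {m : ℕ} (f : EuclideanSpace ℝ (Fin m) → ℝ) (μ : ℝ)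
    (hμ : 0 < μ) (hfdiff : Differentiable ℝ f)
    (hsc : ∀ u v : EuclideanSpace ℝ (Fin m),
      μ * ‖u - v‖ ^ 2 ≤ ⟪gradient f u - gradient f v, u - v⟫)
    (u v : EuclideanSpace ℝ (Fin m)) :
    f u + ⟪gradient f u, v - u⟫ + μ / 2 * ‖v - u‖ ^ 2 ≤ f v := by
  set d := v - u with hd
  have key : ∀ t : ℝ, HasDerivAt (fun s : ℝ => f (u + s • d))
      ⟪gradient f (u + t • d), d⟫ t := by
    intro t
    have h1 : HasDerivAt (fun s : ℝ => u + s • d) d t := by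
      simpa using ((hasDerivAt_id t).smul_const d).const_add u
    have h2 := (hfdiff (u + t • d)).hasGradientAt
    have h3 := h2.hasFDerivAt.comp_hasDerivAt t h1
    simpa [InnerProductSpace.toDual_apply_apply, Function.comp_def] using h3
  set ψ : ℝ → ℝ := fun t => f (u + t • d) - t * ⟪gradient f u, d⟫ - μ / 2 * t ^ 2 * ‖d‖ ^ 2 with hψdef
  have hψ : ∀ t : ℝ, HasDerivAt ψ
      (⟪gradient f (u + t • d), d⟫ - ⟪gradient f u, d⟫ - μ * t * ‖d‖ ^ 2) t := by
    intro t
    have h1 : HasDerivAt (fun s : ℝ => s * ⟪gradient f u, d⟫) ⟪gradient f u, d⟫ t := by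
      simpa using (hasDerivAt_id t).mul_const ⟪gradient f u, d⟫
    have h2 : HasDerivAt (fun s : ℝ => μ / 2 * s ^ 2 * ‖d‖ ^ 2) (μ * t * ‖d‖ ^ 2) t := by
      have := (((hasDerivAt_pow 2 t).const_mul (μ / 2)).mul_const (‖d‖ ^ 2))
      refine this.congr_deriv ?_
      ring
    exact ((key t).sub h1).sub h2
  have hderiv_nonneg : ∀ t : ℝ, 0 < t →
      0 ≤ ⟪gradient f (u + t • d), d⟫ - ⟪gradient f u, d⟫ - μ * t * ‖d‖ ^ 2 := by
    intro t ht
    have h := hsc (u + t • d) u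
    have he : u + t • d - u = t • d := by abel
    rw [he] at h
    rw [real_inner_smul_right, inner_sub_left, norm_smul] at h
    have hn : (‖t‖ * ‖d‖) ^ 2 = t ^ 2 * ‖d‖ ^ 2 := by
      rw [mul_pow, Real.norm_eq_abs, sq_abs]
    rw [hn] at h
    nlinarith [h]
  have hmono : MonotoneOn ψ (Set.Icc (0:ℝ) 1) := by
    apply monotoneOn_of_deriv_nonneg (convex_Icc 0 1)
    · exact fun t _ => (hψ t).continuousAt.continuousWithinAt
    · exact fun t _ => (hψ t).differentiableAt.differentiableWithinAt
    · intro t ht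
      rw [interior_Icc] at ht
      rw [(hψ t).deriv]
      exact hderiv_nonneg t ht.1
  have h01 := hmono (Set.left_mem_Icc.2 zero_le_one) (Set.right_mem_Icc.2 zero_le_one) zero_le_one
  simp only [hψdef] at h01
  have h1 : u + (1:ℝ) • d = v := by simp [hd]
  have h0 : u + (0:ℝ) • d = u := by simp
  rw [h1, h0] at h01
  nlinarith [h01]

/-- Convergence of approximate gradient descent (objective value bound):
if `f` is `μ`-strongly convex with minimizer `wstar`, `|f - g| ≤ α` and `‖∇f - ∇g‖ ≤ ζ`
pointwise, `g w_T ≤ g w̃` and `‖∇g w̃‖ ≤ ρ`, then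
`f w_T - f wstar ≤ 2α + (ρ² + 2ζρ + ζ²)/(2μ)`. -/
theorem approx_gd_objective_bound {m : ℕ}
    (f g : EuclideanSpace ℝ (Fin m) → ℝ) (μ α ζ ρ : ℝ)
    (wstar wtilde wT : EuclideanSpace ℝ (Fin m))
    (hμ : 0 < μ) (hα : 0 ≤ α) (hζ : 0 ≤ ζ) (hρ : 0 ≤ ρ)
    (hfdiff : Differentiable ℝ f) (hgdiff : Differentiable ℝ g)
    (hsc : ∀ u v : EuclideanSpace ℝ (Fin m),
      μ * ‖u - v‖ ^ 2 ≤ ⟪gradient f u - gradient f v, u - v⟫)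
    (hmin : ∀ v : EuclideanSpace ℝ (Fin m), f wstar ≤ f v)
    (hobj : ∀ w : EuclideanSpace ℝ (Fin m), |f w - g w| ≤ α)
    (hgrad : ∀ w : EuclideanSpace ℝ (Fin m), ‖gradient f w - gradient g w‖ ≤ ζ)
    (hgT : g wT ≤ g wtilde)
    (hρbound : ‖gradient g wtilde‖ ≤ ρ) :
    f wT - f wstar ≤ 2 * α + (ρ ^ 2 + 2 * ζ * ρ + ζ ^ 2) / (2 * μ) := by
  -- PL at wtilde
  have hsl := strong_lower_bound f μ hμ hfdiff hsc wtilde wstar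
  have hcs : ⟪gradient f wtilde, wtilde - wstar⟫ ≤ ‖gradient f wtilde‖ * ‖wtilde - wstar‖ :=
    real_inner_le_norm _ _
  have hflip : ⟪gradient f wtilde, wstar - wtilde⟫ = -⟪gradient f wtilde, wtilde - wstar⟫ := by
    rw [← inner_neg_right]; congr 1; abel
  have hgnorm : ‖gradient f wtilde‖ ≤ ζ + ρ := by
    calc ‖gradient f wtilde‖ ≤ ‖gradient f wtilde - gradient g wtilde‖ + ‖gradient g wtilde‖ := by
          simpa using norm_add_le (gradient f wtilde - gradient g wtilde) (gradient g wtilde)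
      _ ≤ ζ + ρ := add_le_add (hgrad wtilde) hρbound
  have hPL : f wtilde - f wstar ≤ (ζ + ρ) ^ 2 / (2 * μ) := by
    have hr := norm_nonneg (wtilde - wstar)
    have hg0 := norm_nonneg (gradient f wtilde)
    rw [hflip] at hsl
    have hsq : ‖gradient f wtilde‖ * ‖wtilde - wstar‖ - μ / 2 * ‖wstar - wtilde‖ ^ 2
        ≤ ‖gradient f wtilde‖ ^ 2 / (2 * μ) := by
      have hns : ‖wstar - wtilde‖ = ‖wtilde - wstar‖ := by rw [← norm_neg]; congr 1; abel
      rw [hns, le_div_iff₀ (by positivity : (0:ℝ) < 2 * μ)]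
      nlinarith [sq_nonneg (‖gradient f wtilde‖ - μ * ‖wtilde - wstar‖)]
    have hmono2 : ‖gradient f wtilde‖ ^ 2 / (2 * μ) ≤ (ζ + ρ) ^ 2 / (2 * μ) := by
      apply div_le_div_of_nonneg_right ?_ (by positivity)
      · exact pow_le_pow_left₀ hg0 hgnorm 2
    nlinarith [hsl, hcs, hsq, hmono2]
  have h1 := abs_le.1 (hobj wT)
  have h2 := abs_le.1 (hobj wtilde)
  have hfin : (ζ + ρ) ^ 2 = ρ ^ 2 + 2 * ζ * ρ + ζ ^ 2 := by ring
  rw [hfin] at hPL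
  linarith [h1.2, h2.1, hPL, hgT]
end

section
/- Under the hypotheses of the previous statement (f μ-strongly convex, |f - g| ≤ α, ‖∇f - ∇g‖ ≤ ζ pointwise, g(w_T) ≤ g(w̃), ‖∇g(w̃)‖ ≤ ρ), the output satisfies ‖w_T - w*_f‖² ≤ 4α/μ + (ρ² + 2ζρ + ζ²)/μ². -/
open scoped RealInnerProductSpace

lemma inner_gradient_eq {E : Type*} [NormedAddCommGroup E] [InnerProductSpace ℝ E]
    [CompleteSpace E] (f : E → ℝ) (x y : E) (hf : DifferentiableAt ℝ f x) :
    fderiv ℝ f x y = ⟪gradient f x, y⟫ := by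
  have : fderiv ℝ f x = InnerProductSpace.toDual ℝ E (gradient f x) := by
    simp [gradient]
  rw [this, InnerProductSpace.toDual_apply_apply]

lemma strong_convex_lower {E : Type*} [NormedAddCommGroup E] [InnerProductSpace ℝ E]
    [CompleteSpace E] (f : E → ℝ) (μ : ℝ) (hμ : 0 < μ) (hf : Differentiable ℝ f)
    (hsc : ∀ u v : E, μ * ‖u - v‖ ^ 2 ≤ ⟪gradient f u - gradient f v, u - v⟫)
    (u v : E) :
    f u + ⟪gradient f u, v - u⟫ + μ / 2 * ‖v - u‖ ^ 2 ≤ f v := by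
  set d := v - u with hd
  set φ : ℝ → ℝ := fun t => f (u + t • d) - t * ⟪gradient f u, d⟫ - μ * t ^ 2 / 2 * ‖d‖ ^ 2
    with hφ
  have hline : ∀ t : ℝ, HasDerivAt (fun t : ℝ => u + t • d) d t := by
    intro t
    simpa using ((hasDerivAt_id t).smul_const d).const_add u
  have hφd : ∀ t : ℝ, HasDerivAt φ
      (⟪gradient f (u + t • d), d⟫ - ⟪gradient f u, d⟫ - μ * t * ‖d‖ ^ 2) t := by
    intro t
    have h1 : HasDerivAt (fun t : ℝ => f (u + t • d)) (fderiv ℝ f (u + t • d) d) t :=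
      (hf _).hasFDerivAt.comp_hasDerivAt t (hline t)
    rw [inner_gradient_eq f _ d (hf _)] at h1
    have h2 : HasDerivAt (fun t : ℝ => t * ⟪gradient f u, d⟫) ⟪gradient f u, d⟫ t := by
      simpa using (hasDerivAt_id t).mul_const _
    have h3 : HasDerivAt (fun t : ℝ => μ * t ^ 2 / 2 * ‖d‖ ^ 2) (μ * t * ‖d‖ ^ 2) t := by
      have h3' := (((hasDerivAt_pow 2 t).const_mul μ).div_const 2).mul_const (‖d‖ ^ 2)
      exact h3'.congr_deriv (by push_cast; ring)
    exact (h1.sub h2).sub h3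
  have mono : MonotoneOn φ (Set.Icc (0:ℝ) 1) := by
    apply monotoneOn_of_deriv_nonneg (convex_Icc 0 1)
    · exact fun t _ => ((hφd t).differentiableAt.continuousAt).continuousWithinAt
    · exact fun t _ => ((hφd t).differentiableAt).differentiableWithinAt
    · intro t ht
      rw [interior_Icc] at ht
      rw [(hφd t).deriv]
      have key := hsc (u + t • d) u
      have he : (u + t • d) - u = t • d := by abel
      rw [he] at key
      have h1 : ⟪gradient f (u + t • d) - gradient f u, t • d⟫
          = t * (⟪gradient f (u + t • d), d⟫ - ⟪gradient f u, d⟫) := by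
        rw [inner_smul_right, inner_sub_left]
      have h2 : ‖t • d‖ ^ 2 = t ^ 2 * ‖d‖ ^ 2 := by
        rw [norm_smul, mul_pow, Real.norm_eq_abs, sq_abs]
      rw [h1, h2] at key
      have ht0 : 0 < t := ht.1
      nlinarith [key]
  have h01 := mono (Set.mem_Icc.2 ⟨le_refl 0, zero_le_one⟩)
      (Set.mem_Icc.2 ⟨zero_le_one, le_refl 1⟩) zero_le_one
  have e0 : φ 0 = f u := by simp [hφ]
  have e1 : φ 1 = f v - ⟪gradient f u, d⟫ - μ / 2 * ‖d‖ ^ 2 := by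
    simp only [hφ, one_smul, one_pow, one_mul]
    rw [show u + d = v by rw [hd]; abel]; ring
  rw [e0, e1] at h01
  linarith

/-- Convergence of approximate gradient descent (distance bound):
under the same hypotheses as the objective-value bound, the output satisfies
`‖w_T - wstar‖² ≤ 4α/μ + (ρ² + 2ζρ + ζ²)/μ²`. -/
theorem approx_gd_distance_bound {m : ℕ}
    (f g : EuclideanSpace ℝ (Fin m) → ℝ) (μ α ζ ρ : ℝ)
    (wstar wtilde wT : EuclideanSpace ℝ (Fin m))
    (hμ : 0 < μ) (hα : 0 ≤ α) (hζ : 0 ≤ ζ) (hρ : 0 ≤ ρ)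
    (hfdiff : Differentiable ℝ f) (hgdiff : Differentiable ℝ g)
    (hsc : ∀ u v : EuclideanSpace ℝ (Fin m),
      μ * ‖u - v‖ ^ 2 ≤ ⟪gradient f u - gradient f v, u - v⟫)
    (hmin : ∀ v : EuclideanSpace ℝ (Fin m), f wstar ≤ f v)
    (hobj : ∀ w : EuclideanSpace ℝ (Fin m), |f w - g w| ≤ α)
    (hgrad : ∀ w : EuclideanSpace ℝ (Fin m), ‖gradient f w - gradient g w‖ ≤ ζ)
    (hgT : g wT ≤ g wtilde)
    (hρbound : ‖gradient g wtilde‖ ≤ ρ) :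
    ‖wT - wstar‖ ^ 2 ≤ 4 * α / μ + (ρ ^ 2 + 2 * ζ * ρ + ζ ^ 2) / μ ^ 2 := by
  -- gradient vanishes at the minimizer
  have hloc : IsLocalMin f wstar := Filter.Eventually.of_forall hmin
  have hg0 : gradient f wstar = 0 := by
    rw [gradient, hloc.fderiv_eq_zero, map_zero]
  -- quadratic growth
  have hQG := strong_convex_lower f μ hμ hfdiff hsc wstar wT
  rw [hg0, inner_zero_left] at hQG
  -- PL-type bound at wtilde
  have hPL := strong_convex_lower f μ hμ hfdiff hsc wtilde wstar
  set B := ‖gradient f wtilde‖ with hB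
  have hBρζ : B ≤ ρ + ζ := by
    calc B = ‖(gradient f wtilde - gradient g wtilde) + gradient g wtilde‖ := by
            rw [hB]; congr 1; abel
      _ ≤ ‖gradient f wtilde - gradient g wtilde‖ + ‖gradient g wtilde‖ := norm_add_le _ _
      _ ≤ ζ + ρ := add_le_add (hgrad wtilde) hρbound
      _ = ρ + ζ := by ring
  have hinner : -(B * ‖wstar - wtilde‖) ≤ ⟪gradient f wtilde, wstar - wtilde⟫ := by
    have := abs_real_inner_le_norm (gradient f wtilde) (wstar - wtilde)
    have h2 := neg_abs_le (⟪gradient f wtilde, wstar - wtilde⟫)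
    linarith
  have hfw : f wtilde - f wstar ≤ B ^ 2 / (2 * μ) := by
    rw [le_div_iff₀ (by positivity)]
    have hx : 0 ≤ ‖wstar - wtilde‖ := norm_nonneg _
    nlinarith [hPL, hinner, sq_nonneg (μ * ‖wstar - wtilde‖ - B)]
  -- objective comparisons
  have h1 : f wT ≤ g wT + α := by have := abs_le.1 (hobj wT); linarith
  have h2 : g wtilde ≤ f wtilde + α := by have := abs_le.1 (hobj wtilde); linarith
  have hchain : f wT - f wstar ≤ 2 * α + B ^ 2 / (2 * μ) := by linarith
  have hB0 : 0 ≤ B := norm_nonneg _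
  have hBsq : B ^ 2 ≤ (ρ + ζ) ^ 2 := by nlinarith
  have hD : μ / 2 * ‖wT - wstar‖ ^ 2 ≤ 2 * α + (ρ + ζ) ^ 2 / (2 * μ) := by
    have h3 : B ^ 2 / (2 * μ) ≤ (ρ + ζ) ^ 2 / (2 * μ) := by gcongr
    linarith
  have key : ‖wT - wstar‖ ^ 2 * μ ^ 2 ≤ 4 * α * μ + (ρ + ζ) ^ 2 := by
    have h4 := mul_le_mul_of_nonneg_left hD (by positivity : (0:ℝ) ≤ 2 * μ)
    have hμ' : μ ≠ 0 := ne_of_gt hμ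
    field_simp at h4
    nlinarith [h4]
  have hr : 4 * α / μ + (ρ ^ 2 + 2 * ζ * ρ + ζ ^ 2) / μ ^ 2
      = (4 * α * μ + (ρ + ζ) ^ 2) / μ ^ 2 := by
    field_simp; ring
  rw [hr, le_div_iff₀ (pow_pos hμ 2)]
  linarith
end

section
/- If the objective f has strong convexity parameter μ_f and F : ℝ → ℝ is a nonincreasing nonnegative function on [Θ − R², Θ] with F(Θ) ≥ 1/Θ, then the barrier-augmented objective f⁺(w) = f(w) − λ·B(Θ − ‖w‖²), where B' = F and λ > 0, is (μ_f + 2λ/Θ)-strongly convex on {w : ‖w‖ ≤ R}, where R² < Θ. -/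
open scoped RealInnerProductSpace

lemma barrier_hasGradientAt {m : ℕ} (f : EuclideanSpace ℝ (Fin m) → ℝ) (B F : ℝ → ℝ)
    (lam Θ R : ℝ)
    (hdiff : Differentiable ℝ f)
    (hBF : ∀ x ∈ Set.Icc (Θ - R ^ 2) Θ, HasDerivAt B (F x) x)
    (w : EuclideanSpace ℝ (Fin m)) (hw : Θ - ‖w‖ ^ 2 ∈ Set.Icc (Θ - R ^ 2) Θ) :
    HasGradientAt (fun z => f z - lam * B (Θ - ‖z‖ ^ 2))
      (gradient f w + (2 * lam * F (Θ - ‖w‖ ^ 2)) • w) w := by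
  have hnorm : HasFDerivAt (fun z : EuclideanSpace ℝ (Fin m) => ‖z‖ ^ 2)
      ((2:ℝ) • (innerSL ℝ w)) w := by
    have := (hasFDerivAt_id w).norm_sq (F := EuclideanSpace ℝ (Fin m))
    simpa [two_smul] using this
  have ha : HasFDerivAt (fun z : EuclideanSpace ℝ (Fin m) => Θ - ‖z‖ ^ 2)
      (-((2:ℝ) • (innerSL ℝ w))) w := hnorm.const_sub Θ
  have hB : HasDerivAt B (F (Θ - ‖w‖ ^ 2)) (Θ - ‖w‖ ^ 2) := hBF _ hw
  have hcomp : HasFDerivAt (fun z : EuclideanSpace ℝ (Fin m) => B (Θ - ‖z‖ ^ 2))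
      (F (Θ - ‖w‖ ^ 2) • (-((2:ℝ) • (innerSL ℝ w)))) w := hB.comp_hasFDerivAt w ha
  have htot := ((hdiff w).hasFDerivAt.sub (hcomp.const_mul lam))
  rw [hasGradientAt_iff_hasFDerivAt]
  refine HasFDerivAt.congr_fderiv htot ?_
  have hfg : fderiv ℝ f w = InnerProductSpace.toDual ℝ _ (gradient f w) := by
    simp [gradient]
  ext x
  rw [hfg]
  simp [inner_add_left, real_inner_smul_left]
  ring

/-- Strong convexity of the barrier-augmented objective: if `f` is `μf`-strongly convex and
`F : ℝ → ℝ` is nonincreasing and nonnegative on `[Θ - R², Θ]` with `F Θ ≥ 1/Θ`, then the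
barrier-augmented objective `f⁺(w) = f(w) - λ B(Θ - ‖w‖²)`, where `B' = F` and `λ > 0`, is
`(μf + 2λ/Θ)`-strongly convex on `{w : ‖w‖ ≤ R}`, where `R² < Θ`. -/
theorem barrier_augmented_strong_convexity {m : ℕ}
    (f : EuclideanSpace ℝ (Fin m) → ℝ)
    (B F : ℝ → ℝ)
    (μf lam Θ R : ℝ)
    (hμf : 0 < μf) (hlam : 0 < lam) (hΘ : 0 < Θ) (hR : 0 < R) (hRΘ : R ^ 2 < Θ)
    (hdiff : Differentiable ℝ f)
    (hsc : ∀ u v : EuclideanSpace ℝ (Fin m),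
      μf * ‖u - v‖ ^ 2 ≤ ⟪gradient f u - gradient f v, u - v⟫)
    (hBF : ∀ x ∈ Set.Icc (Θ - R ^ 2) Θ, HasDerivAt B (F x) x)
    (hFanti : AntitoneOn F (Set.Icc (Θ - R ^ 2) Θ))
    (hFnonneg : ∀ x ∈ Set.Icc (Θ - R ^ 2) Θ, 0 ≤ F x)
    (hFΘ : 1 / Θ ≤ F Θ) :
    ∀ u v : EuclideanSpace ℝ (Fin m), ‖u‖ ≤ R → ‖v‖ ≤ R →
      (μf + 2 * lam / Θ) * ‖u - v‖ ^ 2 ≤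
        ⟪gradient (fun z => f z - lam * B (Θ - ‖z‖ ^ 2)) u -
          gradient (fun z => f z - lam * B (Θ - ‖z‖ ^ 2)) v, u - v⟫ := by
  intro u v hu hv
  have hΘmem : Θ ∈ Set.Icc (Θ - R ^ 2) Θ := ⟨by nlinarith, le_refl Θ⟩
  have hmem : ∀ w : EuclideanSpace ℝ (Fin m), ‖w‖ ≤ R →
      Θ - ‖w‖ ^ 2 ∈ Set.Icc (Θ - R ^ 2) Θ := by
    intro w hw
    have h1 : ‖w‖ ^ 2 ≤ R ^ 2 := pow_le_pow_left₀ (norm_nonneg w) hw 2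
    have h2 : 0 ≤ ‖w‖ ^ 2 := by positivity
    exact ⟨by linarith, by linarith⟩
  have hmu := hmem u hu
  have hmv := hmem v hv
  have Hu : gradient (fun z => f z - lam * B (Θ - ‖z‖ ^ 2)) u
      = gradient f u + (2 * lam * F (Θ - ‖u‖ ^ 2)) • u :=
    (barrier_hasGradientAt f B F lam Θ R hdiff hBF u hmu).gradient
  have Hv : gradient (fun z => f z - lam * B (Θ - ‖z‖ ^ 2)) v
      = gradient f v + (2 * lam * F (Θ - ‖v‖ ^ 2)) • v :=
    (barrier_hasGradientAt f B F lam Θ R hdiff hBF v hmv).gradient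
  set α := F (Θ - ‖u‖ ^ 2) with hα
  set β := F (Θ - ‖v‖ ^ 2) with hβ
  have htα : 1 / Θ ≤ α := le_trans hFΘ (hFanti hmu hΘmem (by nlinarith [sq_nonneg ‖u‖]))
  have htβ : 1 / Θ ≤ β := le_trans hFΘ (hFanti hmv hΘmem (by nlinarith [sq_nonneg ‖v‖]))
  have hsign : 0 ≤ (α - β) * (‖u‖ ^ 2 - ‖v‖ ^ 2) := by
    rcases le_total (‖u‖ ^ 2) (‖v‖ ^ 2) with h | h
    · have : α ≤ β := hFanti hmv hmu (by linarith)
      nlinarith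
    · have : β ≤ α := hFanti hmu hmv (by linarith)
      exact mul_nonneg (by linarith) (by linarith)
  have hip : ⟪(gradient f u + (2 * lam * α) • u) - (gradient f v + (2 * lam * β) • v),
      u - v⟫ = ⟪gradient f u - gradient f v, u - v⟫
        + 2 * lam * α * (‖u‖ ^ 2 - ⟪u, v⟫) - 2 * lam * β * (⟪u, v⟫ - ‖v‖ ^ 2) := by
    simp only [inner_sub_left, inner_add_left, inner_sub_right, real_inner_smul_left,
      real_inner_self_eq_norm_sq, real_inner_comm v u]
    ring
  rw [Hu, Hv, hip]
  have hns : ‖u - v‖ ^ 2 = ‖u‖ ^ 2 - 2 * ⟪u, v⟫ + ‖v‖ ^ 2 := by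
    rw [@norm_sub_sq_real]
  have hsc' := hsc u v
  rw [hns] at hsc' ⊢
  have hnuv : (0:ℝ) ≤ ‖u‖ ^ 2 - 2 * ⟪u, v⟫ + ‖v‖ ^ 2 := by
    rw [← hns]; positivity
  have hdiv : 2 * lam / Θ = 2 * lam * (1 / Θ) := by ring
  rw [hdiv]
  nlinarith [mul_nonneg (mul_nonneg hlam.le (sub_nonneg.2 htα)) hnuv,
    mul_nonneg (mul_nonneg hlam.le (sub_nonneg.2 htβ)) hnuv,
    mul_nonneg hlam.le hsign]
end
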